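/- Let T = (S,Σ,κ) be an STS and B ∈ Σ. If B is an attractor for T (i.e. Prob_μ(F B) = 1 for every initial probability measure μ on S), then for every initial probability measure μ on S, Prob_μ(GF B) = 1. -/

import Mathlib

open MeasureTheory ProbabilityTheory ENNReal Filter Topology

namespace STS

variable {S : Type*} [MeasurableSpace S]

/-- Probability of the cylinder `Cyl(A 0, …, A n)` for the Markov chain with kernel `κ`
and initial distribution `μ`. -/
noncomputable def cylProb (κ : Kernel S S) : ℕ → Measure S → (ℕ → Set S) → ℝ≥0∞
  | 0, μ, A => μ (A 0)
  | n + 1, μ, A => ∫⁻ s in A 0, cylProb κ n (κ s) (fun i => A (i + 1)) ∂μ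

/-- `P` assigns to each initial (probability) distribution the path measure (on `ℕ → S`,
with the product σ-algebra) of the time-homogeneous Markov chain with transition kernel `κ`,
as given by the Ionescu–Tulcea construction: it is the unique probability measure giving
cylinders their prescribed probabilities. -/
def IsPathMeasure (κ : Kernel S S) (P : Measure S → Measure (ℕ → S)) : Prop :=
  ∀ μ : Measure S, IsProbabilityMeasure μ →
    IsProbabilityMeasure (P μ) ∧
    ∀ (n : ℕ) (A : ℕ → Set S), (∀ i, MeasurableSet (A i)) →
      P μ {ρ | ∀ i ≤ n, ρ i ∈ A i} = cylProb κ n μ A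

/-- The path event `F B`: eventually reach `B`. -/
def evF (B : Set S) : Set (ℕ → S) := {ρ | ∃ k, ρ k ∈ B}

/-- The path event `F≤n B`. -/
def evFle (n : ℕ) (B : Set S) : Set (ℕ → S) := {ρ | ∃ k ≤ n, ρ k ∈ B}

/-- The path event `F≥p B`. -/
def evFge (p : ℕ) (B : Set S) : Set (ℕ → S) := {ρ | ∃ k, p ≤ k ∧ ρ k ∈ B}

/-- The path event `GF B`: visit `B` infinitely often. -/
def evGF (B : Set S) : Set (ℕ → S) := {ρ | ∀ n, ∃ k, n ≤ k ∧ ρ k ∈ B}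

/-- The path event `FG B`: eventually stay in `B` forever. -/
def evFG (B : Set S) : Set (ℕ → S) := {ρ | ∃ n, ∀ k, n ≤ k → ρ k ∈ B}

/-- The until event `B' U B`. -/
def evU (B' B : Set S) : Set (ℕ → S) := {ρ | ∃ k, ρ k ∈ B ∧ ∀ j < k, ρ j ∈ B'}

/-- The bounded until event `B' U≤n B`. -/
def evUle (n : ℕ) (B' B : Set S) : Set (ℕ → S) := {ρ | ∃ k ≤ n, ρ k ∈ B ∧ ∀ j < k, ρ j ∈ B'}

/-- The avoid-set `B̃` of `B`: states from which `B` is reached with probability `0`. -/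
def avoid (P : Measure S → Measure (ℕ → S)) (B : Set S) : Set S :=
  {s | P (Measure.dirac s) (evF B) = 0}

/-- `T` is decisive w.r.t. `B` from `μ`. -/
def Decisive (P : Measure S → Measure (ℕ → S)) (μ : Measure S) (B : Set S) : Prop :=
  P μ (evF B ∪ evF (avoid P B)) = 1

/-- `T` is strongly decisive w.r.t. `B` from `μ`. -/
def StronglyDecisive (P : Measure S → Measure (ℕ → S)) (μ : Measure S) (B : Set S) : Prop :=
  P μ (evGF B ∪ evF (avoid P B)) = 1

/-- `T` is persistently decisive w.r.t. `B` from `μ`. -/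
def PersistentlyDecisive (P : Measure S → Measure (ℕ → S)) (μ : Measure S) (B : Set S) : Prop :=
  ∀ p : ℕ, P μ (evFge p B ∪ evFge p (avoid P B)) = 1

/-- `PreProb(B)`: measurable sets `B'` from which `B` is reached in one step with positive
probability, whatever the initial distribution concentrated on `B'`. -/
def PreProb (P : Measure S → Measure (ℕ → S)) (B : Set S) : Set (Set S) :=
  {B' | MeasurableSet B' ∧ ∀ μ' : Measure S, IsProbabilityMeasure μ' → μ' B' = 1 →
    0 < P μ' {ρ | ρ 0 ∈ B' ∧ ρ 1 ∈ B}}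

/-- `T` is fair w.r.t. `B` from `μ`. -/
def Fair (P : Measure S → Measure (ℕ → S)) (μ : Measure S) (B : Set S) : Prop :=
  ∀ B' ∈ PreProb P B, 0 < P μ (evGF B') →
    P μ (evGF B ∩ evGF B') = P μ (evGF B')

/-- The one-step measure transformer `Ω_T`. -/
noncomputable def Omega (κ : Kernel S S) (μ : Measure S) : Measure S :=
  μ.bind (fun s => κ s)

/-- Two measures are qualitatively equivalent if they have the same null (measurable) sets. -/
def QualEquiv {T : Type*} [MeasurableSpace T] (μ ν : Measure T) : Prop :=
  ∀ A : Set T, MeasurableSet A → (μ A = 0 ↔ ν A = 0)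

/-- `T₂ = (S₂,κ₂)` is an `α`-abstraction of `T₁ = (S₁,κ₁)`. -/
def IsAbstraction {S₁ S₂ : Type*} [MeasurableSpace S₁] [MeasurableSpace S₂]
    (κ₁ : Kernel S₁ S₁) (κ₂ : Kernel S₂ S₂) (α : S₁ → S₂) : Prop :=
  ∀ μ : Measure S₁, IsProbabilityMeasure μ →
    QualEquiv (Measure.map α (Omega κ₁ μ)) (Omega κ₂ (Measure.map α μ))


open Set

lemma measurable_cylProb (κ : Kernel S S) [IsSFiniteKernel κ] :
    ∀ (n : ℕ) (A : ℕ → Set S), (∀ i, MeasurableSet (A i)) →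
      Measurable fun s => cylProb κ n (κ s) A := by
  intro n
  induction n with
  | zero => intro A hA; exact κ.measurable_coe (hA 0)
  | succ n ih =>
    intro A hA
    have hg : Measurable fun x => cylProb κ n (κ x) (fun i => A (i + 1)) :=
      ih _ (fun i => hA (i + 1))
    exact hg.setLIntegral_kernel (hA 0)

lemma cylProb_bind (κ : Kernel S S) [IsSFiniteKernel κ] (n : ℕ) (μ : Measure S)
    (A : ℕ → Set S) (hA : ∀ i, MeasurableSet (A i)) :
    cylProb κ n (μ.bind κ) A = ∫⁻ s, cylProb κ n (κ s) A ∂μ := by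
  cases n with
  | zero => exact Measure.bind_apply (hA 0) κ.measurable.aemeasurable
  | succ n =>
    have hg : Measurable fun x => cylProb κ n (κ x) (fun i => A (i + 1)) :=
      measurable_cylProb κ n _ (fun i => hA (i + 1))
    show (∫⁻ s in A 0, cylProb κ n (κ s) (fun i => A (i + 1)) ∂(μ.bind κ)) = _
    rw [← lintegral_indicator (hA 0), Measure.lintegral_bind κ.measurable.aemeasurable
      (hg.indicator (hA 0)).aemeasurable]
    simp_rw [lintegral_indicator (hA 0)]
    rfl

def cylSets (S : Type*) [MeasurableSpace S] : Set (Set (ℕ → S)) :=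
  {s | ∃ (n : ℕ) (A : ℕ → Set S), (∀ i, MeasurableSet (A i)) ∧
    s = {ρ : ℕ → S | ∀ i ≤ n, ρ i ∈ A i}}

lemma isPiSystem_cylSets : IsPiSystem (cylSets S) := by
  rintro s ⟨n, A, hA, rfl⟩ t ⟨m, A', hA', rfl⟩ -
  refine ⟨max n m, fun i => (if i ≤ n then A i else univ) ∩ (if i ≤ m then A' i else univ),
    fun i => ?_, ?_⟩
  · refine MeasurableSet.inter ?_ ?_ <;> split_ifs <;>
      first | exact hA _ | exact hA' _ | exact MeasurableSet.univ
  · ext ρ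
    simp only [mem_inter_iff, mem_setOf_eq]
    constructor
    · rintro ⟨h1, h2⟩ i _
      constructor <;> split_ifs with h
      · exact h1 i h
      · trivial
      · exact h2 i h
      · trivial
    · intro h
      constructor
      · intro i hi
        have := (h i (le_trans hi (le_max_left n m))).1
        simpa [hi] using this
      · intro i hi
        have := (h i (le_trans hi (le_max_right n m))).2
        simpa [hi] using this

lemma measurableSet_cyl {n : ℕ} {A : ℕ → Set S} (hA : ∀ i, MeasurableSet (A i)) :
    MeasurableSet {ρ : ℕ → S | ∀ i ≤ n, ρ i ∈ A i} := by
  have : {ρ : ℕ → S | ∀ i ≤ n, ρ i ∈ A i} = ⋂ i ∈ Iic n, (fun ρ : ℕ → S => ρ i) ⁻¹' A i := by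
    ext ρ; simp [Set.mem_iInter]
  rw [this]
  exact MeasurableSet.biInter (to_countable _) (fun i _ => (measurable_pi_apply i) (hA i))

lemma generateFrom_cylSets :
    MeasurableSpace.generateFrom (cylSets S) = MeasurableSpace.pi := by
  apply le_antisymm
  · rw [MeasurableSpace.generateFrom_le_iff]
    rintro s ⟨n, A, hA, rfl⟩
    exact measurableSet_cyl hA
  · rw [MeasurableSpace.pi, iSup_le_iff]
    intro i
    rw [MeasurableSpace.comap_le_iff_le_map]
    intro A hA
    apply MeasurableSpace.measurableSet_generateFrom
    refine ⟨i, fun j => if j = i then A else univ, fun j => ?_, ?_⟩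
    · simp only []
      split_ifs with h
      · exact hA
      · exact MeasurableSet.univ
    · ext ρ
      simp only [mem_preimage, mem_setOf_eq]
      constructor
      · intro h j hj
        split_ifs with hji
        · subst hji; exact h
        · trivial
      · intro h
        have := h i le_rfl
        simpa using this

lemma isProbabilityMeasure_bind (κ : Kernel S S) [IsMarkovKernel κ]
    (μ : Measure S) [IsProbabilityMeasure μ] : IsProbabilityMeasure (μ.bind κ) := by
  constructor
  rw [Measure.bind_apply MeasurableSet.univ κ.measurable.aemeasurable]
  simp

def shift : (ℕ → S) → (ℕ → S) := fun ρ i => ρ (i + 1)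

lemma measurable_shift : Measurable (shift : (ℕ → S) → (ℕ → S)) :=
  measurable_pi_lambda _ fun i => measurable_pi_apply (i + 1)

lemma map_shift (κ : Kernel S S) [IsMarkovKernel κ]
    (P : Measure S → Measure (ℕ → S)) (hP : IsPathMeasure κ P)
    (μ : Measure S) (hμ : IsProbabilityMeasure μ) :
    Measure.map shift (P μ) = P (μ.bind κ) := by
  haveI := hμ
  haveI := (hP μ hμ).1
  haveI := isProbabilityMeasure_bind κ μ
  haveI := (hP (μ.bind κ) (isProbabilityMeasure_bind κ μ)).1
  haveI : IsProbabilityMeasure (Measure.map shift (P μ)) :=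
    Measure.isProbabilityMeasure_map measurable_shift.aemeasurable
  refine ext_of_generate_finite (cylSets S) generateFrom_cylSets.symm isPiSystem_cylSets
    ?_ (by simp)
  rintro s ⟨n, A, hA, rfl⟩
  rw [Measure.map_apply measurable_shift (measurableSet_cyl hA)]
  set A' : ℕ → Set S := fun i => Nat.casesOn i univ A with hA'def
  have hA' : ∀ i, MeasurableSet (A' i) := by
    intro i; cases i with
    | zero => exact MeasurableSet.univ
    | succ j => exact hA j
  have hpre : shift ⁻¹' {ρ : ℕ → S | ∀ i ≤ n, ρ i ∈ A i}
      = {ρ : ℕ → S | ∀ i ≤ n + 1, ρ i ∈ A' i} := by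
    ext ρ
    simp only [mem_preimage, mem_setOf_eq, shift]
    constructor
    · intro h i hi
      cases i with
      | zero => trivial
      | succ j => exact h j (Nat.lt_succ_iff.mp hi)
    · intro h i hi
      exact h (i + 1) (Nat.succ_le_succ hi)
  rw [hpre, (hP μ hμ).2 (n + 1) A' hA',
    (hP (μ.bind κ) (isProbabilityMeasure_bind κ μ)).2 n A hA,
    cylProb_bind κ n μ A hA]
  show (∫⁻ s in (univ : Set S), cylProb κ n (κ s) (fun i => A' (i + 1)) ∂μ) = _
  rw [setLIntegral_univ]

lemma measurableSet_evFge {B : Set S} (hB : MeasurableSet B) (p : ℕ) :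
    MeasurableSet (evFge p B) := by
  have : evFge p B = ⋃ k, ⋃ _ : p ≤ k, (fun ρ : ℕ → S => ρ k) ⁻¹' B := by
    ext ρ; simp [evFge]
  rw [this]
  exact MeasurableSet.iUnion fun k => MeasurableSet.iUnion fun _ =>
    (measurable_pi_apply k) hB


/-- if `B` is an attractor for the STS, then for every initial probability
measure `μ`, `Prob_μ(GF B) = 1`. -/
theorem statement_2 {S : Type*} [MeasurableSpace S]
    (κ : Kernel S S) [IsMarkovKernel κ]
    (P : Measure S → Measure (ℕ → S)) (hP : IsPathMeasure κ P)
    (B : Set S) (hB : MeasurableSet B)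
    (hattr : ∀ μ : Measure S, IsProbabilityMeasure μ → P μ (evF B) = 1) :
    ∀ μ : Measure S, IsProbabilityMeasure μ → P μ (evGF B) = 1 := by
  have hfge : ∀ (p : ℕ) (μ : Measure S), IsProbabilityMeasure μ → P μ (evFge p B) = 1 := by
    intro p
    induction p with
    | zero =>
      intro μ hμ
      have : evFge 0 B = evF B := by ext ρ; simp [evFge, evF]
      rw [this]; exact hattr μ hμ
    | succ p ih =>
      intro μ hμ
      have hpre : evFge (p + 1) B = shift ⁻¹' (evFge p B) := by
        ext ρ
        simp only [evFge, mem_preimage, mem_setOf_eq, shift]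
        constructor
        · rintro ⟨k, hk, hkB⟩
          obtain ⟨m, rfl⟩ := Nat.exists_eq_add_of_le hk
          exact ⟨p + m, Nat.le_add_right p m, by
            have : p + m + 1 = p + 1 + m := by omega
            rw [this]; exact hkB⟩
        · rintro ⟨k, hk, hkB⟩
          exact ⟨k + 1, by omega, hkB⟩
      rw [hpre, ← Measure.map_apply measurable_shift (measurableSet_evFge hB p),
        map_shift κ P hP μ hμ]
      exact ih (μ.bind κ) (isProbabilityMeasure_bind κ μ)
  intro μ hμ
  haveI := hμ
  haveI := (hP μ hμ).1
  have hGF : evGF B = ⋂ p, evFge p B := by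
    ext ρ; simp [evGF, evFge]
  have hGFm : MeasurableSet (evGF B) := by
    rw [hGF]; exact MeasurableSet.iInter fun p => measurableSet_evFge hB p
  rw [← prob_compl_eq_zero_iff hGFm]
  have : (evGF B)ᶜ = ⋃ p, (evFge p B)ᶜ := by
    rw [hGF, Set.compl_iInter]
  rw [this]
  exact measure_iUnion_null fun p =>
    (prob_compl_eq_zero_iff (measurableSet_evFge hB p)).mpr (hfge p μ hμ)

end STS
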